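/- If a system of inequalities of the form a_m·x_{i_m} ≤ x_{j_m} + x_{k_m} (a_m ≥ 2) together with x_i > 0 has a strongly connected associated digraph, and at least one coefficient a_m satisfies a_m > 2, then the system is infeasible. -/
import Mathlib


theorem stmt_4 (N M : ℕ) (hN : 0 < N) (hM : 0 < M)
    (a : Fin M → ℝ) (ha : ∀ m, 2 ≤ a m) (i j k : Fin M → Fin N)
    (hconn : ∀ α β : Fin N,
      Relation.ReflTransGen (fun α β => ∃ m, i m = α ∧ (j m = β ∨ k m = β)) α β)
    (hbig : ∃ m, 2 < a m) :
    ¬ ∃ x : Fin N → ℝ, (∀ n, 0 < x n) ∧ ∀ m, a m * x (i m) ≤ x (j m) + x (k m) := by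
  rintro ⟨x, hx, hineq⟩
  haveI : Nonempty (Fin N) := ⟨⟨0, hN⟩⟩
  obtain ⟨α₀, hα₀⟩ := Finset.exists_max_image Finset.univ x ⟨⟨0, hN⟩, Finset.mem_univ _⟩
  set c := x α₀ with hc
  have hle : ∀ n, x n ≤ c := fun n => hα₀.2 n (Finset.mem_univ n)
  have hcpos : 0 < c := hx α₀
  -- every node reachable from α₀ has value c
  have key : ∀ β, x β = c := by
    intro β
    have h := hconn α₀ β
    induction h with
    | refl => rfl
    | @tail b β hbβ hr ih =>
      obtain ⟨m, him, hjk⟩ := hr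
      have h1 : a m * x (i m) ≤ x (j m) + x (k m) := hineq m
      have hib : x (i m) = c := him ▸ ih
      have h2 : 2 * c ≤ x (j m) + x (k m) := by
        calc 2 * c ≤ a m * c := by nlinarith [ha m]
          _ = a m * x (i m) := by rw [hib]
          _ ≤ _ := h1
      have hj : x (j m) = c := le_antisymm (hle _) (by linarith [hle (k m)])
      have hk : x (k m) = c := le_antisymm (hle _) (by linarith [hle (j m)])
      rcases hjk with h | h
      · rw [← h]; exact hj
      · rw [← h]; exact hk
  obtain ⟨m, hm⟩ := hbig
  have := hineq m
  rw [key (i m), key (j m), key (k m)] at this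
  nlinarith
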